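/- Among generalized median mechanisms with n-1 phantom locations on [0,1], any mechanism that has at least one phantom not equal to 1/2 has approximation ratio strictly worse than 3/2 with respect to the minimum utility. Concretely, if a phantom a satisfies 0 ≤ a < 1/2, then on the instance with n-1 agents at a and one agent at 1, the mechanism locates the facility at a, giving approximation ratio (1+a)/(2a) > 3/2 (and the ratio is unbounded when a = 0). -/

import Mathlib

/-- Minimum utility of facility location `y` for agents `x`. -/
noncomputable def minUtil {n : ℕ} (x : Fin (n + 1) → ℝ) (y : ℝ) : ℝ :=
  Finset.univ.inf' Finset.univ_nonempty (fun i => 1 - |x i - y|)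

/-- The median of a multiset of reals (of odd cardinality 2m+1 this is the
(m+1)-th smallest element). -/
noncomputable def medianOf (s : Multiset ℝ) : ℝ :=
  (s.sort (· ≤ ·)).getD (s.card / 2) 0

lemma sorted_getD_eq (l : List ℝ) (hl : l.Pairwise (· ≤ ·)) (k : ℕ) (hk : k < l.length)
    (a : ℝ) (hge : ∀ b ∈ l, a ≤ b) (hcount : k + 1 ≤ l.count a) :
    l.getD k 0 = a := by
  have hgd : l.getD k 0 = l[k] := by
    simp [List.getD_eq_getElem?_getD, List.getElem?_eq_getElem hk]
  rw [hgd]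
  refine le_antisymm ?_ (hge _ (l.getElem_mem hk))
  by_contra h
  push_neg at h
  have key : l.count a = (l.take k).count a + (l.drop k).count a := by
    rw [← List.count_append, List.take_append_drop]
  have h1 : (l.take k).count a ≤ k := by
    refine le_trans List.count_le_length ?_
    simp [List.length_take]
  have h2 : (l.drop k).count a = 0 := by
    refine List.count_eq_zero.mpr (fun hmem => ?_)
    obtain ⟨i, hi, hEq⟩ := List.mem_iff_getElem.mp hmem
    have hki : k + i < l.length := by
      have := hi; simp [List.length_drop] at this; omega
    have : (l.drop k)[i] = l[k + i] := by simp
    rw [this] at hEq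
    have hle : l[k] ≤ l[k + i] := hl.rel_get_of_le (Nat.le_add_right k i)
    rw [hEq] at hle
    exact absurd hle (not_le.mpr h)
  omega

/-- A generalized median mechanism with a phantom `a` ≠ 1/2, say 0 ≤ a < 1/2 and
`a` the smallest phantom: on the instance with n agents at `a` and one agent at 1,
the facility is located at `a`, the achieved minimum utility is `a`, the optimal
minimum utility is (1+a)/2, and the approximation ratio is worse than 3/2. -/
theorem stmt_8 (n : ℕ) (z : Fin (n + 1) → ℝ) (hz : ∀ j, z j ∈ Set.Icc (0 : ℝ) 1)
    (a : ℝ) (j : Fin (n + 1)) (hja : z j = a)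
    (ha : 0 ≤ a ∧ a < 1 / 2) (hmin : ∀ k, a ≤ z k)
    (x : Fin (n + 2) → ℝ)
    (hx : ∀ i : Fin (n + 2), i ≠ Fin.last (n + 1) → x i = a)
    (hlast : x (Fin.last (n + 1)) = 1) :
    medianOf (Finset.univ.val.map x + Finset.univ.val.map z) = a ∧
    minUtil x (medianOf (Finset.univ.val.map x + Finset.univ.val.map z)) = a ∧
    1 - (x (Fin.last (n + 1)) - x 0) / 2 = (1 + a) / 2 ∧
    (3 / 2) * minUtil x (medianOf (Finset.univ.val.map x + Finset.univ.val.map z))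
      < (1 + a) / 2 := by
  classical
  obtain ⟨ha0, ha2⟩ := ha
  set s : Multiset ℝ := Finset.univ.val.map x + Finset.univ.val.map z with hs
  have hcard : s.card = 2 * n + 3 := by
    simp [hs]; omega
  -- all elements ≥ a
  have hge : ∀ b ∈ s, a ≤ b := by
    intro b hb
    rw [hs, Multiset.mem_add] at hb
    rcases hb with hb | hb
    · obtain ⟨i, _, rfl⟩ := Multiset.mem_map.mp hb
      by_cases hi : i = Fin.last (n + 1)
      · rw [hi, hlast]; linarith
      · rw [hx i hi]
    · obtain ⟨k, _, rfl⟩ := Multiset.mem_map.mp hb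
      exact hmin k
  -- count of a is at least n+2
  have hcount : n + 2 ≤ s.count a := by
    rw [hs, Multiset.count_add]
    have hc1 : n + 1 ≤ Multiset.count a (Finset.univ.val.map x) := by
      rw [Multiset.count_map]
      have hsub : (Finset.univ.erase (Fin.last (n + 1))) ⊆
          Finset.univ.filter (fun i => a = x i) := by
        intro i hi
        rw [Finset.mem_filter]
        exact ⟨Finset.mem_univ i, (hx i (Finset.ne_of_mem_erase hi)).symm⟩
      have := Finset.card_le_card hsub
      rw [← Finset.filter_val]
      simp [Finset.card_erase_of_mem] at this
      exact this
    have hc2 : 1 ≤ Multiset.count a (Finset.univ.val.map z) := by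
      rw [Multiset.one_le_count_iff_mem]
      exact Multiset.mem_map.mpr ⟨j, by simp, hja⟩
    omega
  -- the sorted list
  have hmed : medianOf s = a := by
    unfold medianOf
    have hlen : (s.sort (· ≤ ·)).length = 2 * n + 3 := by
      rw [Multiset.length_sort, hcard]
    have hidx : s.card / 2 = n + 1 := by rw [hcard]; omega
    rw [hidx]
    refine sorted_getD_eq _ (Multiset.pairwise_sort _ _) _ (by omega) a ?_ ?_
    · intro b hb
      exact hge b ((Multiset.mem_sort _).mp hb)
    · have : (s.sort (· ≤ ·)).count a = s.count a := by
        rw [← Multiset.coe_count, Multiset.sort_eq]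
      omega
  refine ⟨hmed, ?_, ?_, ?_⟩
  · -- minUtil
    rw [hmed]
    unfold minUtil
    have hlastval : 1 - |x (Fin.last (n + 1)) - a| = a := by
      rw [hlast, abs_of_nonneg (by linarith)]; ring
    apply le_antisymm
    · refine le_trans (Finset.inf'_le _ (Finset.mem_univ (Fin.last (n + 1)))) ?_
      rw [hlastval]
    · refine Finset.le_inf' _ _ (fun i _ => ?_)
      by_cases hi : i = Fin.last (n + 1)
      · rw [hi, hlastval]
      · rw [hx i hi]; simp; linarith
  · have h0 : x 0 = a := by
      apply hx
      intro h
      have := congrArg Fin.val h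
      simp [Fin.last] at this
    rw [hlast, h0]; ring
  · rw [hmed]
    have : minUtil x a = a := by
      unfold minUtil
      have hlastval : 1 - |x (Fin.last (n + 1)) - a| = a := by
        rw [hlast, abs_of_nonneg (by linarith)]; ring
      apply le_antisymm
      · refine le_trans (Finset.inf'_le _ (Finset.mem_univ (Fin.last (n + 1)))) ?_
        rw [hlastval]
      · refine Finset.le_inf' _ _ (fun i _ => ?_)
        by_cases hi : i = Fin.last (n + 1)
        · rw [hi, hlastval]
        · rw [hx i hi]; simp; linarith
    rw [this]; linarith
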